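/- Let q be a real number with 0 < q < 1, let k ≥ 1 be an integer, set f_k(n) = binom(n-1, k-1), and define a_{n,k}(q) by the recurrence a_{0,k}(q) = 1 and a_{n,k}(q) = f_k(n) + (1 - q^{n-1}) a_{n-1,k}(q) for n ≥ 1. Then lim_{n→∞} ( binom(n,k) - a_{n,k}(q) ) = ∑_{n=k}^∞ binom(n,k) q^n ∏_{j=n+1}^∞ (1 - q^j). -/

import Mathlib

open Filter Finset

theorem limit_form_dilcher (q : ℝ) (hq0 : 0 < q) (hq1 : q < 1) (k : ℕ) (hk : 1 ≤ k)
    (f : ℕ → ℝ) (hf : ∀ n : ℕ, f n = ((n - 1).choose (k - 1) : ℝ))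
    (a : ℕ → ℝ) (ha0 : a 0 = 1)
    (ha : ∀ n : ℕ, a (n + 1) = f (n + 1) + (1 - q ^ n) * a n) :
    Filter.Tendsto (fun n : ℕ => (n.choose k : ℝ) - a n) Filter.atTop
      (nhds (∑' n : ℕ, ((k + n).choose k : ℝ) * q ^ (k + n) *
        ∏' j : ℕ, (1 - q ^ (k + n + 1 + j)))) := by
  have hq0' : (0 : ℝ) ≤ q := hq0.le
  -- basic facts about powers
  have hpow_nonneg : ∀ i : ℕ, (0 : ℝ) ≤ q ^ i := fun i => pow_nonneg hq0' i
  have hpow_le_one : ∀ i : ℕ, q ^ i ≤ 1 := fun i => pow_le_one₀ hq0' hq1.le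
  have hpow_le_q : ∀ i : ℕ, 1 ≤ i → q ^ i ≤ q := fun i hi =>
    pow_le_of_le_one hq0' hq1.le (by omega)
  have hpos : ∀ i : ℕ, 1 ≤ i → (0 : ℝ) < 1 - q ^ i := fun i hi => by
    have := hpow_le_q i hi; linarith
  -- the coefficient sequence
  set c : ℕ → ℝ := fun m => (m.choose k : ℝ) * q ^ m with hc
  have hc_nonneg : ∀ m, 0 ≤ c m := fun m =>
    mul_nonneg (by positivity) (hpow_nonneg m)
  -- summability of c
  have hsum_c : Summable c := by
    have h1 : Summable (fun m : ℕ => (m : ℝ) ^ k * q ^ m) :=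
      summable_pow_mul_geometric_of_norm_lt_one k
        (by rwa [Real.norm_eq_abs, abs_of_pos hq0])
    refine h1.of_nonneg_of_le hc_nonneg fun m => ?_
    have : (m.choose k : ℝ) ≤ (m : ℝ) ^ k := by
      exact_mod_cast Nat.choose_le_pow m k
    exact mul_le_mul_of_nonneg_right this (hpow_nonneg m)
  -- summability of logs and multipliability of tail products
  have hgeo : ∀ s : ℕ, Summable (fun j : ℕ => q ^ (s + j)) := fun s => by
    simpa [pow_add] using (summable_geometric_of_lt_one hq0' hq1).mul_left (q ^ s)
  have hlogsum : ∀ m : ℕ, Summable (fun j : ℕ => Real.log (1 - q ^ (m + 1 + j))) := by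
    intro m
    have hb : Summable (fun j : ℕ => (1 - q)⁻¹ * q ^ (m + 1 + j)) :=
      ((hgeo (m + 1))).mul_left _
    refine Summable.of_abs (hb.of_nonneg_of_le (fun j => abs_nonneg _) fun j => ?_)
    set x := q ^ (m + 1 + j) with hx
    have hx0 : 0 ≤ x := hpow_nonneg _
    have hxq : x ≤ q := hpow_le_q _ (by omega)
    have h1x : 0 < 1 - x := by linarith
    have h1q : 0 < 1 - q := by linarith
    have hlog_le : Real.log (1 - x) ≤ 0 := Real.log_nonpos (by linarith) (by linarith)
    rw [abs_of_nonpos hlog_le]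
    have hlb : 1 - (1 - x)⁻¹ ≤ Real.log (1 - x) := Real.one_sub_inv_le_log_of_pos h1x
    have heq : (1 - x)⁻¹ - 1 = x / (1 - x) := by field_simp; ring
    have hdle : x / (1 - x) ≤ x / (1 - q) := by gcongr <;> linarith
    have hfin : x / (1 - q) = (1 - q)⁻¹ * x := by rw [div_eq_mul_inv, mul_comm]
    linarith [hlb, heq, hdle, hfin]
  have hmul : ∀ m : ℕ, Multipliable (fun j : ℕ => 1 - q ^ (m + 1 + j)) := fun m =>
    Real.multipliable_of_summable_log (fun j => hpos _ (by omega)) (hlogsum m)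
  -- tail products and partial products
  set Q : ℕ → ℝ := fun m => ∏' j : ℕ, (1 - q ^ (m + 1 + j)) with hQ
  have hprod_tend : ∀ m : ℕ,
      Tendsto (fun n : ℕ => ∏ i ∈ range n, (1 - q ^ (m + 1 + i))) atTop (nhds (Q m)) :=
    fun m => (hmul m).hasProd.tendsto_prod_nat
  have hpp_mem : ∀ m n : ℕ, 0 ≤ (∏ i ∈ range n, (1 - q ^ (m + 1 + i))) ∧
      (∏ i ∈ range n, (1 - q ^ (m + 1 + i))) ≤ 1 := by
    intro m n
    constructor
    · exact Finset.prod_nonneg fun i _ => (hpos _ (by omega)).le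
    · exact Finset.prod_le_one (fun i _ => (hpos _ (by omega)).le)
        (fun i _ => by have := hpow_nonneg (m + 1 + i); linarith)
  have hQ_nonneg : ∀ m, 0 ≤ Q m := fun m =>
    ge_of_tendsto' (hprod_tend m) (fun n => (hpp_mem m n).1)
  have hQ_le_one : ∀ m, Q m ≤ 1 := fun m =>
    le_of_tendsto' (hprod_tend m) (fun n => (hpp_mem m n).2)
  -- the recurrence for b
  set b : ℕ → ℝ := fun n => (n.choose k : ℝ) - a n with hb
  obtain ⟨k', rfl⟩ : ∃ k', k = k' + 1 := ⟨k - 1, by omega⟩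
  have hbrec : ∀ n : ℕ, b (n + 1) = (1 - q ^ n) * b n + c n := by
    intro n
    simp only [hb, hc, ha n, hf (n + 1), Nat.add_sub_cancel, Nat.choose_succ_succ n k']
    push_cast
    ring
  -- closed form for b
  have hform : ∀ N : ℕ, b (N + 1) =
      ∑ m ∈ range (N + 1), c m * ∏ j ∈ Finset.Ico (m + 1) (N + 1), (1 - q ^ j) := by
    intro N
    induction N with
    | zero =>
      rw [hbrec 0]; simp
    | succ N ih =>
      have hsplit : ∑ m ∈ range (N + 1 + 1), c m * ∏ j ∈ Finset.Ico (m + 1) (N + 1 + 1), (1 - q ^ j)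
          = (∑ m ∈ range (N + 1), (c m * ∏ j ∈ Finset.Ico (m + 1) (N + 1), (1 - q ^ j)))
              * (1 - q ^ (N + 1)) + c (N + 1) := by
        rw [Finset.sum_range_succ]
        simp only [Finset.Ico_self, Finset.prod_empty, mul_one]
        congr 1
        rw [Finset.sum_mul]
        refine Finset.sum_congr rfl fun m hm => ?_
        rw [Finset.prod_Ico_succ_top (by simp only [Finset.mem_range] at hm; omega : m + 1 ≤ N + 1)]
        ring
      rw [hbrec (N + 1), ih, hsplit]
      ring
  -- the doubly-indexed family
  set F : ℕ → ℕ → ℝ := fun N m =>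
    if m < N then c m * ∏ j ∈ Finset.Ico (m + 1) N, (1 - q ^ j) else 0 with hF
  have hFsum : ∀ N : ℕ, b (N + 1) = ∑' m, F (N + 1) m := by
    intro N
    rw [tsum_eq_sum (s := range (N + 1)) (fun m hm => by
      simp only [hF]; rw [if_neg]; simpa using hm)]
    rw [hform N]
    exact Finset.sum_congr rfl fun m hm => by
      simp only [hF]; rw [if_pos (by simpa using hm)]
  -- pointwise convergence
  have hptwise : ∀ m : ℕ, Tendsto (fun N => F N m) atTop (nhds (c m * Q m)) := by
    intro m
    have h1 : Tendsto (fun N : ℕ => c m * ∏ i ∈ range (N - (m + 1)), (1 - q ^ (m + 1 + i)))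
        atTop (nhds (c m * Q m)) :=
      (((hprod_tend m).comp (tendsto_sub_atTop_nat (m + 1)))).const_mul (c m)
    refine h1.congr' ?_
    filter_upwards [eventually_ge_atTop (m + 1)] with N hN
    simp only [hF]
    rw [if_pos (by omega), Finset.prod_Ico_eq_prod_range]
  -- uniform bound
  have hbound : ∀ N m : ℕ, ‖F N m‖ ≤ c m := by
    intro N m
    simp only [hF]
    split
    · rw [Real.norm_eq_abs, abs_of_nonneg (mul_nonneg (hc_nonneg m)
        (Finset.prod_nonneg fun j hj => (hpos j (by
          simp only [Finset.mem_Ico] at hj; omega)).le))]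
      have hle1 : (∏ j ∈ Finset.Ico (m + 1) N, (1 - q ^ j)) ≤ 1 :=
        Finset.prod_le_one (fun j hj => (hpos j (by
          simp only [Finset.mem_Ico] at hj; omega)).le)
          (fun j _ => by have := hpow_nonneg j; linarith)
      calc c m * _ ≤ c m * 1 := mul_le_mul_of_nonneg_left hle1 (hc_nonneg m)
        _ = c m := mul_one _
    · simpa using hc_nonneg m
  -- dominated convergence
  have hDC : Tendsto (fun N => ∑' m, F N m) atTop (nhds (∑' m, c m * Q m)) :=
    tendsto_tsum_of_dominated_convergence hsum_c hptwise
      (Filter.Eventually.of_forall fun N => fun m => hbound N m)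
  -- hence b tends to the sum
  have hbtend : Tendsto b atTop (nhds (∑' m, c m * Q m)) := by
    rw [← tendsto_add_atTop_iff_nat 1]
    refine (hDC.comp (tendsto_add_atTop_nat 1)).congr fun N => ?_
    exact (hFsum N).symm
  -- identify the sum with the statement's sum
  have hgsummable : Summable (fun m => c m * Q m) := by
    refine hsum_c.of_nonneg_of_le (fun m => mul_nonneg (hc_nonneg m) (hQ_nonneg m))
      fun m => ?_
    calc c m * Q m ≤ c m * 1 := mul_le_mul_of_nonneg_left (hQ_le_one m) (hc_nonneg m)
      _ = c m := mul_one _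
  have hsum_eq : (∑' m, c m * Q m) = ∑' n : ℕ,
      (((k' + 1) + n).choose (k' + 1) : ℝ) * q ^ ((k' + 1) + n) *
        ∏' j : ℕ, (1 - q ^ ((k' + 1) + n + 1 + j)) := by
    rw [← hgsummable.sum_add_tsum_nat_add (k' + 1)]
    have hzero : ∀ m ∈ range (k' + 1), c m * Q m = 0 := by
      intro m hm
      simp only [Finset.mem_range] at hm
      simp [hc, Nat.choose_eq_zero_of_lt hm]
    rw [Finset.sum_eq_zero hzero, zero_add]
    refine tsum_congr fun n => ?_
    simp only [hc, hQ]
    rw [Nat.add_comm n (k' + 1)]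
  rw [← hsum_eq]
  exact hbtend
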